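/- Let n ≥ 1 and let R : Fin n → Fin n → Fin n → Fin n → ℂ, written R(α,β̄,γ,δ̄), be a Kähler-type curvature tensor (i.e. R(α,β̄,γ,δ̄) = R(γ,β̄,α,δ̄), R(α,β̄,γ,δ̄) = R(α,δ̄,γ,β̄), and conj(R(α,β̄,γ,δ̄)) = R(β,ᾱ,δ,γ̄)) which is strongly semi-negative in the sense of Siu. Let m ≥ 1, let H be an m×m Hermitian positive-definite complex matrix, and let u, w : Fin n → Fin m → ℂ be arbitrary. Then the complex number S = ∑_{ρ,δ,γ,β ∈ Fin n} ∑_{i,j,k,l ∈ Fin m} R(ρ,δ̄,γ,β̄) · w(ρ,j) · conj(u(β,l)) · (u(γ,i)·conj(w(δ,k)) − u(γ,k)·conj(w(δ,i))) · H(i,l) · H(k,j) is real and satisfies 0 ≤ S. (This is the pointwise curvature inequality proved at the start of Section 4, with u(γ,i) = f^γ_i, w(ρ,j) = f^ρ_{j̄}, and H(i,l) = h^{i l̄} the inverse Levi form.) -/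

import Mathlib

open BigOperators Finset Matrix ComplexOrder

private lemma sum_comm3 {M : Type*} [AddCommMonoid M] {ι κ₁ κ₂ : Type*}
    [Fintype ι] [Fintype κ₁] [Fintype κ₂] (f : ι → κ₁ → κ₂ → M) :
    ∑ b, ∑ s, ∑ t, f b s t = ∑ s, ∑ t, ∑ b, f b s t := by
  rw [Finset.sum_comm]
  exact Finset.sum_congr rfl fun s _ => Finset.sum_comm

private lemma sum_rev3 {M : Type*} [AddCommMonoid M] {ι κ₁ κ₂ : Type*}
    [Fintype ι] [Fintype κ₁] [Fintype κ₂] (f : ι → κ₁ → κ₂ → M) :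
    ∑ a, ∑ b, ∑ c, f a b c = ∑ c, ∑ b, ∑ a, f a b c := by
  rw [Finset.sum_comm]
  rw [show (∑ b, ∑ a, ∑ c, f a b c) = ∑ b, ∑ c, ∑ a, f a b c from
    Finset.sum_congr rfl fun b _ => Finset.sum_comm]
  exact Finset.sum_comm


set_option maxHeartbeats 1000000

/-- For a Kähler-type curvature tensor `R` that is strongly semi-negative in the
sense of Siu, a Hermitian positive-definite matrix `H` (the inverse Levi form), and arbitrary
families `u`, `w` (the components of `∂_b f` and `∂̄_b f`), the curvature term
`S = ∑ R(ρ,δ̄,γ,β̄) w(ρ,j) conj(u(β,l)) (u(γ,i) conj(w(δ,k)) − u(γ,k) conj(w(δ,i))) H(i,l) H(k,j)`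
is real and nonnegative (expressed via the partial order on `ℂ`, where `0 ≤ S` means exactly
that `S` is real and `0 ≤ S.re`). -/
theorem siu_pointwise_curvature_inequality
    (n m : ℕ) (hn : 1 ≤ n) (hm : 1 ≤ m)
    (R : Fin n → Fin n → Fin n → Fin n → ℂ)
    -- Kähler symmetries of the curvature tensor
    (hsym13 : ∀ α β γ δ, R α β γ δ = R γ β α δ)
    (hsym24 : ∀ α β γ δ, R α β γ δ = R α δ γ β)
    (hreal : ∀ α β γ δ, starRingEnd ℂ (R α β γ δ) = R β α δ γ)
    -- strong semi-negativity in the sense of Siu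
    (hneg : ∀ A B C D : Fin n → ℂ,
      0 ≤ ∑ α, ∑ β, ∑ γ, ∑ δ, R α β γ δ *
        (A α * starRingEnd ℂ (B β) - C α * starRingEnd ℂ (D β)) *
        starRingEnd ℂ (A δ * starRingEnd ℂ (B γ) - C δ * starRingEnd ℂ (D γ)))
    (H : Matrix (Fin m) (Fin m) ℂ)
    -- H is Hermitian positive definite
    (hH : ∀ i l, H l i = starRingEnd ℂ (H i l))
    (hHpos : ∀ v : Fin m → ℂ, v ≠ 0 → 0 < (star v ⬝ᵥ H.mulVec v).re)
    (u w : Fin n → Fin m → ℂ) :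
    0 ≤ ∑ ρ, ∑ δ, ∑ γ, ∑ β, ∑ i, ∑ j, ∑ k, ∑ l,
      R ρ δ γ β * w ρ j * starRingEnd ℂ (u β l) *
        (u γ i * starRingEnd ℂ (w δ k) - u γ k * starRingEnd ℂ (w δ i)) *
        H i l * H k j := by
  -- Step 0: factor H = Bᴴ * B
  obtain ⟨B, hB⟩ : ∃ B : Matrix (Fin m) (Fin m) ℂ, H = Bᴴ * B := by
    have hherm : H.IsHermitian := by
      ext i j
      rw [Matrix.conjTranspose_apply, RCLike.star_def, ← hH]
    suffices hP : H.PosSemidef by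
      open MatrixOrder in
      obtain ⟨B, hB⟩ := CStarAlgebra.nonneg_iff_eq_star_mul_self.mp hP.nonneg
      exact ⟨B, hB⟩
    refine Matrix.PosSemidef.of_dotProduct_mulVec_nonneg hherm fun x => ?_
    by_cases hx : x = 0
    · simp [hx]
    · have h1 := hHpos x hx
      have h2 : (starRingEnd ℂ) (star x ⬝ᵥ H.mulVec x) = star x ⬝ᵥ H.mulVec x := by
        simp only [dotProduct, Matrix.mulVec, dotProduct, map_sum, _root_.map_mul,
          Finset.mul_sum, Pi.star_apply, RCLike.star_def, Complex.conj_conj, ← hH]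
        rw [Finset.sum_comm]
        exact Finset.sum_congr rfl fun i _ => Finset.sum_congr rfl fun j _ => by ring
      have him : (star x ⬝ᵥ H.mulVec x).im = 0 := Complex.conj_eq_iff_im.mp h2
      rw [Complex.le_def]
      exact ⟨by simpa using h1.le, by simp [him]⟩
  set v : Fin m → Fin m → ℂ := fun s i => starRingEnd ℂ (B s i) with hv
  have hHv : ∀ i l, H i l = ∑ s, v s i * starRingEnd ℂ (v s l) := by
    intro i l
    rw [hB]
    simp [Matrix.mul_apply, Matrix.conjTranspose_apply, hv, RCLike.star_def, Complex.conj_conj]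
  set U : Fin m → Fin n → ℂ := fun s γ => ∑ i, u γ i * v s i with hUdef
  set W : Fin m → Fin n → ℂ := fun t ρ => ∑ j, w ρ j * starRingEnd ℂ (v t j) with hWdef
  set F : Fin m → Fin m → ℂ := fun s t => ∑ ρ, ∑ δ, ∑ γ, ∑ β,
    R ρ δ γ β * W t ρ * starRingEnd ℂ (U s β) *
      (U s γ * starRingEnd ℂ (W t δ) - U t γ * starRingEnd ℂ (W s δ)) with hFdef
  -- contraction lemmas
  have contract_l : ∀ (i : Fin m) (β : Fin n),
      ∑ l, starRingEnd ℂ (u β l) * H i l = ∑ s, v s i * starRingEnd ℂ (U s β) := by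
    intro i β
    simp only [hHv, Finset.mul_sum]
    rw [Finset.sum_comm]
    refine Finset.sum_congr rfl fun s _ => ?_
    simp only [hUdef, map_sum, _root_.map_mul, Finset.mul_sum]
    exact Finset.sum_congr rfl fun l _ => by ring
  have contract_j : ∀ (k : Fin m) (ρ : Fin n),
      ∑ j, w ρ j * H k j = ∑ t, v t k * W t ρ := by
    intro k ρ
    simp only [hHv, Finset.mul_sum]
    rw [Finset.sum_comm]
    refine Finset.sum_congr rfl fun t _ => ?_
    simp only [hWdef, Finset.mul_sum]
    exact Finset.sum_congr rfl fun j _ => by ring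
  have contract_ik : ∀ (γ δ : Fin n) (s t : Fin m),
      ∑ i, ∑ k, (u γ i * starRingEnd ℂ (w δ k) - u γ k * starRingEnd ℂ (w δ i)) *
          (v s i * v t k)
        = U s γ * starRingEnd ℂ (W t δ) - U t γ * starRingEnd ℂ (W s δ) := by
    intro γ δ s t
    have e1 : U s γ * starRingEnd ℂ (W t δ)
        = ∑ i, ∑ k, u γ i * v s i * (starRingEnd ℂ (w δ k) * v t k) := by
      simp only [hUdef, hWdef, map_sum, _root_.map_mul, Complex.conj_conj]
      rw [Finset.sum_mul_sum]
    have e2 : U t γ * starRingEnd ℂ (W s δ)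
        = ∑ i, ∑ k, u γ k * v t k * (starRingEnd ℂ (w δ i) * v s i) := by
      simp only [hUdef, hWdef, map_sum, _root_.map_mul, Complex.conj_conj]
      rw [Finset.sum_mul_sum, Finset.sum_comm]
    rw [e1, e2, ← Finset.sum_sub_distrib]
    refine Finset.sum_congr rfl fun i _ => ?_
    rw [← Finset.sum_sub_distrib]
    exact Finset.sum_congr rfl fun k _ => by ring

  -- the eight-fold inner sum contracts to a double sum
  have inner8 : ∀ ρ δ γ β : Fin n,
      (∑ i, ∑ j, ∑ k, ∑ l,
        R ρ δ γ β * w ρ j * starRingEnd ℂ (u β l) *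
          (u γ i * starRingEnd ℂ (w δ k) - u γ k * starRingEnd ℂ (w δ i)) *
          H i l * H k j)
      = ∑ s, ∑ t, R ρ δ γ β * W t ρ * starRingEnd ℂ (U s β) *
          (U s γ * starRingEnd ℂ (W t δ) - U t γ * starRingEnd ℂ (W s δ)) := by
    intro ρ δ γ β
    calc
      (∑ i, ∑ j, ∑ k, ∑ l,
        R ρ δ γ β * w ρ j * starRingEnd ℂ (u β l) *
          (u γ i * starRingEnd ℂ (w δ k) - u γ k * starRingEnd ℂ (w δ i)) *
          H i l * H k j)
        = ∑ i, ∑ j, ∑ k,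
            R ρ δ γ β * w ρ j *
              (u γ i * starRingEnd ℂ (w δ k) - u γ k * starRingEnd ℂ (w δ i)) * H k j *
            (∑ s, v s i * starRingEnd ℂ (U s β)) := by
          refine Finset.sum_congr rfl fun i _ => Finset.sum_congr rfl fun j _ =>
            Finset.sum_congr rfl fun k _ => ?_
          rw [← contract_l i β, Finset.mul_sum]
          exact Finset.sum_congr rfl fun l _ => by ring
      _ = ∑ i, ∑ k, ∑ j,
            R ρ δ γ β * w ρ j *
              (u γ i * starRingEnd ℂ (w δ k) - u γ k * starRingEnd ℂ (w δ i)) * H k j *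
            (∑ s, v s i * starRingEnd ℂ (U s β)) := by
          exact Finset.sum_congr rfl fun i _ => Finset.sum_comm
      _ = ∑ i, ∑ k,
            R ρ δ γ β *
              (u γ i * starRingEnd ℂ (w δ k) - u γ k * starRingEnd ℂ (w δ i)) *
            (∑ s, v s i * starRingEnd ℂ (U s β)) * (∑ t, v t k * W t ρ) := by
          refine Finset.sum_congr rfl fun i _ => Finset.sum_congr rfl fun k _ => ?_
          rw [← contract_j k ρ, Finset.mul_sum]
          exact Finset.sum_congr rfl fun j _ => by ring
      _ = ∑ i, ∑ k, ∑ s, ∑ t,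
            R ρ δ γ β *
              (u γ i * starRingEnd ℂ (w δ k) - u γ k * starRingEnd ℂ (w δ i)) *
            (v s i * starRingEnd ℂ (U s β)) * (v t k * W t ρ) := by
          have expand : ∀ (X : ℂ) (a b : Fin m → ℂ),
              X * (∑ s, a s) * (∑ t, b t) = ∑ s, ∑ t, X * a s * b t := by
            intro X a b
            rw [mul_assoc, Finset.sum_mul_sum, Finset.mul_sum]
            refine Finset.sum_congr rfl fun s _ => ?_
            rw [Finset.mul_sum]
            exact Finset.sum_congr rfl fun t _ => by ring
          refine Finset.sum_congr rfl fun i _ => Finset.sum_congr rfl fun k _ => ?_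
          exact expand _ _ _
      _ = ∑ s, ∑ t, ∑ i, ∑ k,
            R ρ δ γ β *
              (u γ i * starRingEnd ℂ (w δ k) - u γ k * starRingEnd ℂ (w δ i)) *
            (v s i * starRingEnd ℂ (U s β)) * (v t k * W t ρ) := by
          rw [show (∑ i : Fin m, ∑ k : Fin m, ∑ s : Fin m, ∑ t : Fin m,
              R ρ δ γ β *
                (u γ i * starRingEnd ℂ (w δ k) - u γ k * starRingEnd ℂ (w δ i)) *
              (v s i * starRingEnd ℂ (U s β)) * (v t k * W t ρ))
              = ∑ i : Fin m, ∑ s : Fin m, ∑ t : Fin m, ∑ k : Fin m,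
              R ρ δ γ β *
                (u γ i * starRingEnd ℂ (w δ k) - u γ k * starRingEnd ℂ (w δ i)) *
              (v s i * starRingEnd ℂ (U s β)) * (v t k * W t ρ) from
            Finset.sum_congr rfl fun i _ => sum_comm3 _]
          exact sum_comm3 _
      _ = ∑ s, ∑ t,
            R ρ δ γ β * starRingEnd ℂ (U s β) * W t ρ *
            (∑ i, ∑ k,
              (u γ i * starRingEnd ℂ (w δ k) - u γ k * starRingEnd ℂ (w δ i)) *
              (v s i * v t k)) := by
          refine Finset.sum_congr rfl fun s _ => Finset.sum_congr rfl fun t _ => ?_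
          rw [Finset.mul_sum]
          refine Finset.sum_congr rfl fun i _ => ?_
          rw [Finset.mul_sum]
          exact Finset.sum_congr rfl fun k _ => by ring
      _ = ∑ s, ∑ t, R ρ δ γ β * W t ρ * starRingEnd ℂ (U s β) *
            (U s γ * starRingEnd ℂ (W t δ) - U t γ * starRingEnd ℂ (W s δ)) := by
          refine Finset.sum_congr rfl fun s _ => Finset.sum_congr rfl fun t _ => ?_
          rw [contract_ik γ δ s t]
          ring
  -- key1 : the whole sum equals ∑ s, ∑ t, F s t
  have key1 : (∑ ρ, ∑ δ, ∑ γ, ∑ β, ∑ i, ∑ j, ∑ k, ∑ l,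
      R ρ δ γ β * w ρ j * starRingEnd ℂ (u β l) *
        (u γ i * starRingEnd ℂ (w δ k) - u γ k * starRingEnd ℂ (w δ i)) *
        H i l * H k j) = ∑ s, ∑ t, F s t := by
    have e0 : (∑ ρ, ∑ δ, ∑ γ, ∑ β, ∑ i, ∑ j, ∑ k, ∑ l,
        R ρ δ γ β * w ρ j * starRingEnd ℂ (u β l) *
          (u γ i * starRingEnd ℂ (w δ k) - u γ k * starRingEnd ℂ (w δ i)) *
          H i l * H k j)
        = ∑ ρ, ∑ δ, ∑ γ, ∑ β, ∑ s, ∑ t,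
            R ρ δ γ β * W t ρ * starRingEnd ℂ (U s β) *
              (U s γ * starRingEnd ℂ (W t δ) - U t γ * starRingEnd ℂ (W s δ)) :=
      Finset.sum_congr rfl fun ρ _ => Finset.sum_congr rfl fun δ _ =>
        Finset.sum_congr rfl fun γ _ => Finset.sum_congr rfl fun β _ => inner8 ρ δ γ β
    rw [e0]
    have e1 : ∀ h : Fin n → Fin n → Fin n → Fin n → Fin m → Fin m → ℂ,
        (∑ ρ, ∑ δ, ∑ γ, ∑ β, ∑ s, ∑ t, h ρ δ γ β s t)
          = ∑ s, ∑ t, ∑ ρ, ∑ δ, ∑ γ, ∑ β, h ρ δ γ β s t := by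
      intro h
      rw [show (∑ ρ, ∑ δ, ∑ γ, ∑ β, ∑ s, ∑ t, h ρ δ γ β s t)
          = ∑ ρ, ∑ δ, ∑ γ, ∑ s, ∑ t, ∑ β, h ρ δ γ β s t from
        Finset.sum_congr rfl fun ρ _ => Finset.sum_congr rfl fun δ _ =>
          Finset.sum_congr rfl fun γ _ => sum_comm3 _]
      rw [show (∑ ρ, ∑ δ, ∑ γ, ∑ s, ∑ t, ∑ β, h ρ δ γ β s t)
          = ∑ ρ, ∑ δ, ∑ s, ∑ t, ∑ γ, ∑ β, h ρ δ γ β s t from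
        Finset.sum_congr rfl fun ρ _ => Finset.sum_congr rfl fun δ _ => sum_comm3 _]
      rw [show (∑ ρ, ∑ δ, ∑ s, ∑ t, ∑ γ, ∑ β, h ρ δ γ β s t)
          = ∑ ρ, ∑ s, ∑ t, ∑ δ, ∑ γ, ∑ β, h ρ δ γ β s t from
        Finset.sum_congr rfl fun ρ _ => sum_comm3 _]
      exact sum_comm3 _
    exact e1 _
  -- F in the canonical index order
  have hF' : ∀ s t : Fin m, F s t = ∑ α, ∑ β, ∑ γ, ∑ δ,
      R α β γ δ * W t α * starRingEnd ℂ (U s β) *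
        (U s γ * starRingEnd ℂ (W t δ) - U t γ * starRingEnd ℂ (W s δ)) := by
    intro s t
    rw [hFdef]
    calc
      (∑ ρ, ∑ δ, ∑ γ, ∑ β, R ρ δ γ β * W t ρ * starRingEnd ℂ (U s β) *
          (U s γ * starRingEnd ℂ (W t δ) - U t γ * starRingEnd ℂ (W s δ)))
        = ∑ ρ, ∑ δ, ∑ γ, ∑ β, R ρ β γ δ * W t ρ * starRingEnd ℂ (U s β) *
          (U s γ * starRingEnd ℂ (W t δ) - U t γ * starRingEnd ℂ (W s δ)) := by
          refine Finset.sum_congr rfl fun ρ _ => Finset.sum_congr rfl fun δ _ =>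
            Finset.sum_congr rfl fun γ _ => Finset.sum_congr rfl fun β _ => ?_
          rw [hsym24 ρ δ γ β]
      _ = ∑ ρ, ∑ β, ∑ γ, ∑ δ, R ρ β γ δ * W t ρ * starRingEnd ℂ (U s β) *
          (U s γ * starRingEnd ℂ (W t δ) - U t γ * starRingEnd ℂ (W s δ)) :=
          Finset.sum_congr rfl fun ρ _ => sum_rev3 _
  -- key2 : the Siu quantity splits as F s t + F t s
  have key2 : ∀ s t : Fin m,
      (∑ α, ∑ β, ∑ γ, ∑ δ, R α β γ δ *
        (W t α * starRingEnd ℂ (U s β) - W s α * starRingEnd ℂ (U t β)) *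
        starRingEnd ℂ (W t δ * starRingEnd ℂ (U s γ) - W s δ * starRingEnd ℂ (U t γ)))
      = F s t + F t s := by
    intro s t
    rw [hF' s t, hF' t s, ← Finset.sum_add_distrib]
    refine Finset.sum_congr rfl fun α _ => ?_
    rw [← Finset.sum_add_distrib]
    refine Finset.sum_congr rfl fun β _ => ?_
    rw [← Finset.sum_add_distrib]
    refine Finset.sum_congr rfl fun γ _ => ?_
    rw [← Finset.sum_add_distrib]
    refine Finset.sum_congr rfl fun δ _ => ?_
    simp only [map_sub, _root_.map_mul, Complex.conj_conj]
    ring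
  -- assemble
  have hQ : 0 ≤ ∑ s, ∑ t, (F s t + F t s) := by
    refine Finset.sum_nonneg fun s _ => Finset.sum_nonneg fun t _ => ?_
    rw [← key2 s t]
    exact hneg (W t) (U s) (W s) (U t)
  have hsum : (∑ s, ∑ t, (F s t + F t s)) = (∑ s, ∑ t, F s t) + ∑ s, ∑ t, F s t := by
    have flip : (∑ s : Fin m, ∑ t : Fin m, F t s) = ∑ s, ∑ t, F s t := Finset.sum_comm
    simp only [Finset.sum_add_distrib]
    rw [flip]
  rw [key1]
  rw [hsum] at hQ
  rw [Complex.le_def] at hQ ⊢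
  obtain ⟨h1, h2⟩ := hQ
  simp only [Complex.add_re, Complex.add_im, Complex.zero_re, Complex.zero_im] at h1 h2
  exact ⟨by simp only [Complex.zero_re]; linarith, by simp only [Complex.zero_im]; linarith⟩
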